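/- In a weakly involutive integral quantum B-algebra (a weakly involutive unital quantum B-algebra whose unit u is the greatest element), the distinguished element d is the bottom element of (X, ≤). -/
import Mathlib

class QuantumBAlgebra (X : Type*) extends PartialOrder X where
  arr : X → X → X
  sq : X → X → X
  qb1 : ∀ x y z : X, arr y z ≤ arr (arr x y) (arr x z)
  qb2 : ∀ x y z : X, sq y z ≤ arr (sq x y) (sq x z)
  qb3 : ∀ x y z : X, y ≤ z → arr x y ≤ arr x z
  qb4 : ∀ x y z : X, x ≤ arr y z ↔ y ≤ sq x z

open QuantumBAlgebra

theorem stmt17 {X : Type*} [QuantumBAlgebra X] (d u : X)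
    (hu : ∀ x : X, arr u x = x ∧ sq u x = x)
    (htop : ∀ x : X, x ≤ u)
    (hwi : ∀ x : X, sq (arr x d) d = x ∧ arr (sq x d) d = x) :
    ∀ x : X, d ≤ x := by
  have hsqdd : sq d d = u := by
    have := (hwi u).1
    rwa [(hu d).1] at this
  intro x
  have h1 : d ≤ arr (sq x d) d :=
    (qb4 d (sq x d) d).mpr (by rw [hsqdd]; exact htop _)
  rwa [(hwi x).2] at h1
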